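/- Factorization and definiteness of the product-marginal matrix: Let M̄ ∈ ℝ^{2L×2L} be the block matrix with M̄_pp = diag(μ_p^(1)) and M̄_pq = μ_p^(1) (μ_q^(1))ᵀ for p ≠ q, where μ_p^(1) = (1−ρ_p, ρ_p)ᵀ. Let Q ∈ ℝ^{2L×(L+1)} be as defined (columns w₁ = ½(1,−1)ᵀ placed blockwise, last column with all 2-blocks equal to ½(1,1)ᵀ), set ρ̃_p := 1 − 2ρ_p, u := (ρ̃_1,…,ρ̃_L, 1)ᵀ ∈ ℝ^{L+1}, and M̃ := u uᵀ + diag(1−ρ̃_1², …, 1−ρ̃_L², 0) ∈ ℝ^{(L+1)×(L+1)}. Then M̄ = Q M̃ Qᵀ, and if 0 < ρ_p < 1 for all p, then M̃ is positive definite. -/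

import Mathlib

open Matrix BigOperators

noncomputable section

abbrev Idx (L : ℕ) := Fin L × Fin 2

/-- The fixed 1-marginal `μ_p^(1) = (1 - ρ_p, ρ_p)ᵀ`. -/
def mu1 {L : ℕ} (ρ : Fin L → ℝ) (p : Fin L) (t : Fin 2) : ℝ :=
  if t = 0 then 1 - ρ p else ρ p

/-- The product-marginal matrix `M̄` with blocks `M̄_pp = diag(μ_p^(1))` and
`M̄_pq = μ_p^(1) (μ_q^(1))ᵀ` for `p ≠ q`. -/
def Mbar {L : ℕ} (ρ : Fin L → ℝ) : Matrix (Idx L) (Idx L) ℝ :=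
  fun a b =>
    if a.1 = b.1 then (if a.2 = b.2 then mu1 ρ a.1 a.2 else 0)
    else mu1 ρ a.1 a.2 * mu1 ρ b.1 b.2

/-- The matrix `Q ∈ ℝ^{2L×(L+1)}` whose `p`-th column (`p = 1,…,L`) has `p`-th
2-block `½(1,−1)ᵀ` and zero blocks otherwise, and whose `(L+1)`-st column has every
2-block equal to `½(1,1)ᵀ`. -/
def Qmat (L : ℕ) : Matrix (Idx L) (Fin (L + 1)) ℝ :=
  fun a j =>
    if (j : ℕ) = (a.1 : ℕ) then (if a.2 = 0 then 1 / 2 else -(1 / 2))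
    else if (j : ℕ) = L then 1 / 2 else 0

/-- `M̃ = u uᵀ + diag(1−ρ̃_1²,…,1−ρ̃_L²,0)` with `u = (ρ̃_1,…,ρ̃_L,1)ᵀ`,
`ρ̃_p = 1 − 2ρ_p`. -/
def Mtilde {L : ℕ} (ρ : Fin L → ℝ) : Matrix (Fin (L + 1)) (Fin (L + 1)) ℝ :=
  fun i j =>
    (if h : (i : ℕ) < L then 1 - 2 * ρ ⟨i, h⟩ else 1) *
      (if h : (j : ℕ) < L then 1 - 2 * ρ ⟨j, h⟩ else 1) +
    (if i = j then (if h : (i : ℕ) < L then 1 - (1 - 2 * ρ ⟨i, h⟩) ^ 2 else 0) else 0)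

/-- auxiliary vector `u`. -/
def uvec {L : ℕ} (ρ : Fin L → ℝ) (i : Fin (L + 1)) : ℝ :=
  if h : (i : ℕ) < L then 1 - 2 * ρ ⟨i, h⟩ else 1

/-- auxiliary diagonal `d`. -/
def dvec {L : ℕ} (ρ : Fin L → ℝ) (i : Fin (L + 1)) : ℝ :=
  if h : (i : ℕ) < L then 1 - (1 - 2 * ρ ⟨i, h⟩) ^ 2 else 0

lemma Mtilde_eq {L : ℕ} (ρ : Fin L → ℝ) (i j : Fin (L + 1)) :
    Mtilde ρ i j = uvec ρ i * uvec ρ j + (if i = j then dvec ρ i else 0) := rfl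

lemma uvec_castSucc {L : ℕ} (ρ : Fin L → ℝ) (p : Fin L) :
    uvec ρ p.castSucc = 1 - 2 * ρ p := by
  simp [uvec, p.isLt]

lemma uvec_last {L : ℕ} (ρ : Fin L → ℝ) : uvec ρ (Fin.last L) = 1 := by
  simp [uvec]

lemma dvec_castSucc {L : ℕ} (ρ : Fin L → ℝ) (p : Fin L) :
    dvec ρ p.castSucc = 1 - (1 - 2 * ρ p) ^ 2 := by
  simp [dvec, p.isLt]

lemma dvec_last {L : ℕ} (ρ : Fin L → ℝ) : dvec ρ (Fin.last L) = 0 := by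
  simp [dvec]

lemma row_sum {L : ℕ} (a : Idx L) (f : Fin (L + 1) → ℝ) :
    ∑ i, Qmat L a i * f i =
      (if a.2 = 0 then (1:ℝ)/2 else -(1/2)) * f a.1.castSucc + (1/2) * f (Fin.last L) := by
  have hne : a.1.castSucc ≠ Fin.last L := (Fin.castSucc_lt_last a.1).ne
  have hQ : ∀ i, Qmat L a i =
      (if i = a.1.castSucc then (if a.2 = 0 then (1:ℝ)/2 else -(1/2)) else 0) +
      (if i = Fin.last L then 1/2 else 0) := by
    intro i
    unfold Qmat
    by_cases h1 : i = a.1.castSucc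
    · subst h1
      simp [hne, (a.1.isLt).ne]
    · by_cases h2 : i = Fin.last L
      · subst h2
        simp [Fin.val_last, (a.1.isLt).ne', hne.symm]
      · have hv1 : (i : ℕ) ≠ (a.1 : ℕ) := by
          intro h; exact h1 (Fin.ext (by simp [h]))
        have hv2 : (i : ℕ) ≠ L := by
          intro h; exact h2 (Fin.ext (by simp [h]))
        simp [hv1, hv2, h1, h2]
  simp_rw [hQ, add_mul, Finset.sum_add_distrib, ite_mul, zero_mul]
  rw [Finset.sum_ite_eq' Finset.univ, Finset.sum_ite_eq' Finset.univ]
  simp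

lemma col_sum {L : ℕ} (b : Idx L) (f : Fin (L + 1) → ℝ) :
    ∑ j, f j * Qmat L b j =
      f b.1.castSucc * (if b.2 = 0 then (1:ℝ)/2 else -(1/2)) + f (Fin.last L) * (1/2) := by
  simp_rw [mul_comm (f _)]
  rw [row_sum]

/-- Factorization and definiteness of the product-marginal matrix:
`M̄ = Q M̃ Qᵀ`, and if `0 < ρ_p < 1` for all `p` then `M̃` is positive definite. -/
theorem product_marginal_factorization (L : ℕ) (hL : 2 ≤ L) (ρ : Fin L → ℝ)
    (hρ : ∀ p, 0 ≤ ρ p ∧ ρ p ≤ 1) :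
    Mbar ρ = Qmat L * Mtilde ρ * (Qmat L)ᵀ ∧
    ((∀ p, 0 < ρ p ∧ ρ p < 1) → (Mtilde ρ).PosDef) := by
  constructor
  · funext a b
    obtain ⟨p, s⟩ := a
    obtain ⟨q, t⟩ := b
    simp only [Matrix.mul_apply, Matrix.transpose_apply]
    simp_rw [row_sum]
    rw [col_sum]
    simp only [Mtilde_eq, uvec_castSucc, uvec_last, dvec_castSucc, dvec_last,
      Fin.castSucc_inj, (Fin.castSucc_lt_last _).ne, (Fin.castSucc_lt_last _).ne.symm]
    have hs : s = 0 ∨ s = 1 := by omega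
    have ht : t = 0 ∨ t = 1 := by omega
    by_cases hpq : p = q
    · subst hpq
      rcases hs with hs | hs <;> rcases ht with ht | ht <;>
        subst hs <;> subst ht <;>
        simp [Mbar, mu1] <;> ring
    · rcases hs with hs | hs <;> rcases ht with ht | ht <;>
        subst hs <;> subst ht <;>
        simp [Mbar, mu1, hpq] <;> ring
  · intro hρ'
    rw [Matrix.posDef_iff_dotProduct_mulVec]
    constructor
    · rw [Matrix.IsHermitian]
      ext i j
      simp only [Matrix.conjTranspose_apply, Mtilde_eq, star_trivial]
      by_cases h : i = j
      · subst h; ring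
      · rw [if_neg h, if_neg (Ne.symm h)]; ring
    · intro x hx
      have hexp : star x ⬝ᵥ Mtilde ρ *ᵥ x =
          (∑ i, uvec ρ i * x i) * (∑ j, uvec ρ j * x j) +
            ∑ i, dvec ρ i * (x i * x i) := by
        simp only [star_trivial, dotProduct, mulVec, Mtilde_eq]
        rw [Finset.sum_mul, ← Finset.sum_add_distrib]
        refine Finset.sum_congr rfl fun i _ => ?_
        simp_rw [add_mul, Finset.mul_sum, mul_add]
        rw [Finset.sum_add_distrib]
        congr 1
        · exact Finset.sum_congr rfl fun j _ => by ring
        · simp_rw [ite_mul, zero_mul, mul_ite, mul_zero]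
          rw [Finset.sum_ite_eq]
          simp only [Finset.mem_univ, if_true]
          ring
      have hdnn : ∀ i, 0 ≤ dvec ρ i * (x i * x i) := by
        intro i
        refine mul_nonneg ?_ (mul_self_nonneg _)
        unfold dvec
        split
        · rename_i h
          have h1 := (hρ' ⟨i, h⟩).1
          have h2 := (hρ' ⟨i, h⟩).2
          nlinarith
        · exact le_rfl
      have hD : 0 ≤ ∑ i, dvec ρ i * (x i * x i) :=
        Finset.sum_nonneg fun i _ => hdnn i
      rw [hexp]
      by_cases hz : ∀ i : Fin (L + 1), (i : ℕ) < L → x i = 0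
      · have hS : (∑ i, uvec ρ i * x i) = x (Fin.last L) := by
          rw [Finset.sum_eq_single (Fin.last L)]
          · rw [uvec_last, one_mul]
          · intro i _ hi
            have hiL : (i : ℕ) < L := by
              have := i.isLt
              have : (i : ℕ) ≠ L := fun h => hi (Fin.ext (by simp [h]))
              omega
            rw [hz i hiL, mul_zero]
          · simp
        have hxl : x (Fin.last L) ≠ 0 := by
          intro h0
          apply hx
          funext i
          by_cases hiL : (i : ℕ) < L
          · exact hz i hiL
          · have : i = Fin.last L := Fin.ext (by rw [Fin.val_last]; have := i.isLt; omega)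
            rw [this]; exact h0
        rw [hS]
        have : 0 < x (Fin.last L) * x (Fin.last L) := mul_self_pos.mpr hxl
        linarith
      · push_neg at hz
        obtain ⟨i, hiL, hxi⟩ := hz
        have hterm : 0 < dvec ρ i * (x i * x i) := by
          refine mul_pos ?_ (mul_self_pos.mpr hxi)
          unfold dvec
          rw [dif_pos hiL]
          have h1 := (hρ' ⟨i, hiL⟩).1
          have h2 := (hρ' ⟨i, hiL⟩).2
          nlinarith
        have hDpos : 0 < ∑ i, dvec ρ i * (x i * x i) := by
          calc 0 < dvec ρ i * (x i * x i) := hterm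
          _ ≤ ∑ i, dvec ρ i * (x i * x i) :=
            Finset.single_le_sum (fun j _ => hdnn j) (Finset.mem_univ i)
        nlinarith [mul_self_nonneg (∑ i, uvec ρ i * x i)]
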